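/- Let I and J be two disjoint closed intervals in ℝ each of length 1/2, with midpoints m₁ and m₂, and let A = I ∪ J. Set Δ = 1/(2|m₁ − m₂|). Then the zero set of \hat{\chi}_A is exactly (2ℤ ∖ {0}) ∪ (2ℤ+1)Δ, i.e., {2k : k ∈ ℤ, k ≠ 0} ∪ {(2k+1)Δ : k ∈ ℤ}. -/

import Mathlib

open MeasureTheory Real

/-- The Fourier transform of the indicator function of a set `A ⊆ ℝ`,
`\hat{χ}_A(x) = ∫_A e^{-2πi x t} dt`. -/
noncomputable def ftInd1 (A : Set ℝ) (x : ℝ) : ℂ :=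
  ∫ t in A, Complex.exp (((-(2 * π * x * t) : ℝ) : ℂ) * Complex.I)

/-- Value of the Fourier transform of a single interval of length `1/2`. -/
lemma ftInd1_single_int (m x : ℝ) (hx : x ≠ 0) :
    (∫ t in Set.Icc (m - 1/4) (m + 1/4),
        Complex.exp (((-(2 * π * x * t) : ℝ) : ℂ) * Complex.I)) =
      Complex.exp (((-(2 * π * x * m) : ℝ) : ℂ) * Complex.I)
        * (Real.sin (π * x / 2) / (π * x) : ℝ) := by
  have hπ : (π : ℝ) ≠ 0 := Real.pi_ne_zero
  set c : ℂ := ((-(2 * π * x) : ℝ) : ℂ) * Complex.I with hc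
  have hcne : c ≠ 0 := by
    simp [hc, Complex.ext_iff, Complex.I_ne_zero, hπ, hx, mul_ne_zero]
  have hle : m - 1/4 ≤ m + 1/4 := by linarith
  have h1 : (∫ t in Set.Icc (m - 1/4) (m + 1/4),
      Complex.exp (((-(2 * π * x * t) : ℝ) : ℂ) * Complex.I))
      = ∫ t in (m - 1/4)..(m + 1/4), Complex.exp (c * t) := by
    rw [MeasureTheory.integral_Icc_eq_integral_Ioc, ← intervalIntegral.integral_of_le hle]
    congr 1; ext t; congr 1
    push_cast [hc]; ring
  rw [h1, integral_exp_mul_complex hcne]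
  have e1 : c * ((m + 1/4 : ℝ) : ℂ) = c * m + ((-(π * x / 2) : ℝ) : ℂ) * Complex.I := by
    push_cast [hc]; ring
  have e2 : c * ((m - 1/4 : ℝ) : ℂ) = c * m + ((π * x / 2 : ℝ) : ℂ) * Complex.I := by
    push_cast [hc]; ring
  have hcm : c * (m : ℂ) = ((-(2 * π * x * m) : ℝ) : ℂ) * Complex.I := by
    push_cast [hc]; ring
  rw [e1, e2, Complex.exp_add, Complex.exp_add, ← hcm,
     Complex.exp_mul_I, Complex.exp_mul_I]
  have key : (Complex.cos ((-(π*x/2) : ℝ) : ℂ) + Complex.sin ((-(π*x/2) : ℝ) : ℂ) * Complex.I)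
      - (Complex.cos ((π*x/2 : ℝ) : ℂ) + Complex.sin ((π*x/2 : ℝ) : ℂ) * Complex.I)
      = ((Real.sin (π * x / 2) / (π * x) : ℝ) : ℂ) * c := by
    rw [hc, ← Complex.ofReal_cos, ← Complex.ofReal_cos, ← Complex.ofReal_sin,
      ← Complex.ofReal_sin, Real.cos_neg, Real.sin_neg]
    push_cast
    have hpx : ((π : ℂ) * x) ≠ 0 := by
      simp [hπ, hx]
    have hxc : (x : ℂ) ≠ 0 := by exact_mod_cast hx
    field_simp
    ring
  rw [div_eq_iff hcne, ← mul_sub, key]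
  ring

/-- The sum of the two phase factors vanishes iff `x(m₁-m₂)` is half an odd integer. -/
lemma ftInd1_expsum_iff (m₁ m₂ x : ℝ) :
    Complex.exp (((-(2 * π * x * m₁) : ℝ) : ℂ) * Complex.I)
      + Complex.exp (((-(2 * π * x * m₂) : ℝ) : ℂ) * Complex.I) = 0
    ↔ ∃ n : ℤ, x * (m₁ - m₂) = -(1 + 2 * n) / 2 := by
  have hπ : (π : ℝ) ≠ 0 := Real.pi_ne_zero
  rw [add_eq_zero_iff_eq_neg,
    show -Complex.exp (((-(2 * π * x * m₂) : ℝ) : ℂ) * Complex.I)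
      = Complex.exp (↑π * Complex.I + ((-(2 * π * x * m₂) : ℝ) : ℂ) * Complex.I) from by
        rw [Complex.exp_add, Complex.exp_pi_mul_I]; ring,
    Complex.exp_eq_exp_iff_exists_int]
  apply exists_congr; intro n
  have hR : ((-(2 * π * x * m₁) : ℝ) = -(2 * π * x * m₂) + π + 2 * π * n)
      ↔ x * (m₁ - m₂) = -(1 + 2 * n) / 2 := by
    constructor
    · intro h
      apply mul_left_cancel₀ (show (2 * π : ℝ) ≠ 0 by positivity)
      linear_combination -h
    · intro h
      linear_combination (-(2 * π)) * h
  rw [← hR]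
  constructor
  · intro h
    have h2 := congrArg Complex.im h
    simp at h2
    linarith
  · intro h
    have hc := congrArg (Complex.ofReal) h
    push_cast at hc
    push_cast
    linear_combination hc * Complex.I

/-- Rewriting the half-odd-integer condition in terms of `|d|`. -/
lemma ftInd1_final_iff (d x : ℝ) (hd : d ≠ 0) :
    (∃ n : ℤ, x * d = -(1 + 2 * n) / 2) ↔ ∃ k : ℤ, x = (2 * k + 1) * (1 / (2 * |d|)) := by
  rcases hd.lt_or_gt with h | h
  · rw [abs_of_neg h]
    constructor
    · rintro ⟨n, hn⟩
      refine ⟨n, ?_⟩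
      field_simp
      linear_combination 2 * hn
    · rintro ⟨k, hk⟩
      refine ⟨k, ?_⟩
      field_simp at hk
      linear_combination (1/2 : ℝ) * hk
  · rw [abs_of_pos h]
    constructor
    · rintro ⟨n, hn⟩
      refine ⟨-(n+1), ?_⟩
      field_simp
      push_cast
      linear_combination 2 * hn
    · rintro ⟨k, hk⟩
      refine ⟨-(k+1), ?_⟩
      field_simp at hk
      push_cast
      linear_combination (1/2 : ℝ) * hk

/-- The zero set of the Fourier transform of the indicator of the union of two
disjoint closed intervals of length `1/2` with midpoints `m₁, m₂` is
`(2ℤ ∖ {0}) ∪ (2ℤ+1)Δ` where `Δ = 1/(2|m₁ - m₂|)`. -/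
theorem zero_set_two_half_intervals
    (m₁ m₂ : ℝ)
    (hdisj : Disjoint (Set.Icc (m₁ - 1/4) (m₁ + 1/4)) (Set.Icc (m₂ - 1/4) (m₂ + 1/4))) :
    {x : ℝ | ftInd1 (Set.Icc (m₁ - 1/4) (m₁ + 1/4) ∪ Set.Icc (m₂ - 1/4) (m₂ + 1/4)) x = 0} =
      {x : ℝ | ∃ k : ℤ, k ≠ 0 ∧ x = 2 * k} ∪
      {x : ℝ | ∃ k : ℤ, x = (2 * k + 1) * (1 / (2 * |m₁ - m₂|))} := by
  have hπ : (π : ℝ) ≠ 0 := Real.pi_ne_zero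
  have hd : m₁ - m₂ ≠ 0 := by
    intro h
    have hm₁ : m₁ ∈ Set.Icc (m₁ - 1/4) (m₁ + 1/4) := ⟨by linarith, by linarith⟩
    exact Set.disjoint_left.mp hdisj hm₁ ⟨by linarith, by linarith⟩
  ext x
  simp only [Set.mem_setOf_eq, Set.mem_union]
  by_cases hx : x = 0
  · subst hx
    have h1 : ftInd1 (Set.Icc (m₁ - 1/4) (m₁ + 1/4) ∪ Set.Icc (m₂ - 1/4) (m₂ + 1/4)) 0 = 1 := by
      unfold ftInd1
      have hone : ∀ t : ℝ, Complex.exp (((-(2 * π * (0:ℝ) * t) : ℝ) : ℂ) * Complex.I) = 1 := by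
        intro t; norm_num
      simp only [hone, MeasureTheory.setIntegral_const, smul_eq_mul, mul_one]
      rw [Complex.real_smul, mul_one, MeasureTheory.measureReal_def]
      rw [measure_union hdisj measurableSet_Icc]
      simp only [Real.volume_Icc]
      rw [← ENNReal.ofReal_add (by norm_num) (by norm_num)]
      rw [ENNReal.toReal_ofReal (by norm_num)]
      norm_num
    rw [h1]
    constructor
    · intro h; exact absurd h one_ne_zero
    · rintro (⟨k, hk, h0⟩ | ⟨k, h0⟩)
      · exfalso
        have : (k : ℝ) = 0 := by linarith
        exact hk (by exact_mod_cast this)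
      · exfalso
        have habs : (0:ℝ) < |m₁ - m₂| := abs_pos.mpr hd
        rcases mul_eq_zero.mp h0.symm with h' | h'
        · have : (2 * k + 1 : ℤ) = 0 := by exact_mod_cast h'
          omega
        · rw [div_eq_zero_iff] at h'
          rcases h' with h' | h' <;> [exact one_ne_zero h'; linarith]
  · have hcont : Continuous fun t : ℝ =>
        Complex.exp (((-(2 * π * x * t) : ℝ) : ℂ) * Complex.I) := by fun_prop
    have hA : ftInd1 (Set.Icc (m₁ - 1/4) (m₁ + 1/4) ∪ Set.Icc (m₂ - 1/4) (m₂ + 1/4)) x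
        = (Complex.exp (((-(2 * π * x * m₁) : ℝ) : ℂ) * Complex.I)
            + Complex.exp (((-(2 * π * x * m₂) : ℝ) : ℂ) * Complex.I))
          * (Real.sin (π * x / 2) / (π * x) : ℝ) := by
      unfold ftInd1
      rw [MeasureTheory.setIntegral_union hdisj measurableSet_Icc
        hcont.integrableOn_Icc hcont.integrableOn_Icc,
        ftInd1_single_int m₁ x hx, ftInd1_single_int m₂ x hx]
      ring
    rw [hA, mul_eq_zero, ftInd1_expsum_iff, ftInd1_final_iff _ _ hd]
    have hS : ((Real.sin (π * x / 2) / (π * x) : ℝ) : ℂ) = 0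
        ↔ ∃ k : ℤ, k ≠ 0 ∧ x = 2 * k := by
      rw [Complex.ofReal_eq_zero, div_eq_zero_iff]
      have hπx : (π * x : ℝ) ≠ 0 := mul_ne_zero hπ hx
      rw [or_iff_left hπx, Real.sin_eq_zero_iff]
      constructor
      · rintro ⟨n, hn⟩
        refine ⟨n, ?_, ?_⟩
        · rintro rfl
          apply hx
          have : π * x = 0 := by push_cast at hn; linarith
          exact (mul_eq_zero.mp this).resolve_left hπ
        · have := mul_left_cancel₀ hπ (show π * x = π * (2 * n) by linarith)
          exact this
      · rintro ⟨k, hk0, rfl⟩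
        exact ⟨k, by ring⟩
    rw [hS]
    exact or_comm
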